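/- For every real number b and every complex number s with Re(s) > 0, one has ∫₀¹ cos(b·log t) · t^{s/2 − 1} · (2t + (1−t)²/2)^{−s/2} dt = 2^{s/2 − 1} · Γ(s/2 + i b) · Γ(s/2 − i b) / Γ(s). -/

import Mathlib

open MeasureTheory Complex Set

lemma rcpow_exp {r : ℝ} (hr : 0 < r) (w : ℂ) :
    (r : ℂ) ^ w = Complex.exp (w * Real.log r) := by
  rw [Complex.cpow_def_of_ne_zero (by exact_mod_cast hr.ne'), ← Complex.ofReal_log hr.le,
    mul_comm]

lemma aux_beta (a c : ℂ) (ha : 0 < a.re) (hc : 0 < c.re) :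
    ∫ t in Ioo (0:ℝ) 1, ((t:ℂ) ^ (a-1) + (t:ℂ) ^ (c-1)) * (1 + (t:ℂ)) ^ (-(a+c)) =
      Complex.betaIntegral a c := by
  set φ : ℝ → ℝ := fun x => x / (1 - x) with hφ
  have himg : φ '' Ioo (0:ℝ) (1/2) = Ioo (0:ℝ) 1 := by
    ext y
    constructor
    · rintro ⟨x, ⟨hx0, hx1⟩, rfl⟩
      have h1x : 0 < 1 - x := by linarith
      constructor
      · exact div_pos hx0 h1x
      · rw [div_lt_one h1x]; linarith
    · rintro ⟨hy0, hy1⟩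
      refine ⟨y / (1 + y), ⟨div_pos hy0 (by linarith), ?_⟩, ?_⟩
      · rw [div_lt_iff₀ (by linarith)]; linarith
      · have h1y : (0:ℝ) < 1 + y := by linarith
        simp only [hφ]
        have h2 : (1:ℝ) - y / (1 + y) = 1 / (1 + y) := by field_simp; ring
        rw [h2]
        field_simp
  have hderiv : ∀ x ∈ Ioo (0:ℝ) (1/2),
      HasDerivWithinAt φ (((1 - x)^2)⁻¹) (Ioo (0:ℝ) (1/2)) x := by
    intro x hx
    have h1x : (1:ℝ) - x ≠ 0 := by rcases hx with ⟨_, h⟩; intro h'; linarith [sub_eq_zero.mp h']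
    have hd := ((hasDerivAt_id x).div ((hasDerivAt_id x).const_sub 1) h1x)
    have h2 : (1 * id x / (1 - id x) ^ 2 - 0) = ((1 - x)^2)⁻¹ ∨ True := Or.inr trivial
    refine (hd.congr_deriv ?_).hasDerivWithinAt
    simp only [id]
    field_simp
    ring
  have hinj : InjOn φ (Ioo (0:ℝ) (1/2)) := by
    intro x hx y hy hxy
    have hx1 : (1:ℝ) - x ≠ 0 := by rcases hx with ⟨_, h⟩; intro h'; linarith [sub_eq_zero.mp h']
    have hy1 : (1:ℝ) - y ≠ 0 := by rcases hy with ⟨_, h⟩; intro h'; linarith [sub_eq_zero.mp h']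
    simp only [hφ] at hxy
    field_simp at hxy
    nlinarith [hxy]
  set f₁ : ℝ → ℂ := fun x => (x:ℂ) ^ (a-1) * (1 - (x:ℂ)) ^ (c-1) with hf₁
  set f₂ : ℝ → ℂ := fun x => (x:ℂ) ^ (c-1) * (1 - (x:ℂ)) ^ (a-1) with hf₂
  have hint1 : IntegrableOn f₁ (Ioc (0:ℝ) 1) := (Complex.betaIntegral_convergent ha hc).1
  have hint2 : IntegrableOn f₂ (Ioc (0:ℝ) 1) := by
    have := (Complex.betaIntegral_convergent hc ha).1
    exact this
  -- step 1: substitute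
  have step1 : ∫ t in Ioo (0:ℝ) 1, ((t:ℂ) ^ (a-1) + (t:ℂ) ^ (c-1)) * (1 + (t:ℂ)) ^ (-(a+c)) =
      ∫ x in Ioo (0:ℝ) (1/2), (f₁ x + f₂ x) := by
    rw [← himg, integral_image_eq_integral_abs_deriv_smul measurableSet_Ioo hderiv hinj]
    refine setIntegral_congr_fun measurableSet_Ioo (fun x hx => ?_)
    rcases hx with ⟨hx0, hx1⟩
    have h1x : (0:ℝ) < 1 - x := by linarith
    have hφx : (0:ℝ) < φ x := div_pos hx0 h1x
    have h1φ : (1:ℝ) + φ x = (1 - x)⁻¹ := by simp only [hφ]; field_simp; ring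
    have e1 : ((φ x : ℝ):ℂ) ^ (a-1) = Complex.exp ((a-1) * (Real.log x - Real.log (1-x))) := by
      rw [rcpow_exp hφx, hφ]
      simp only []
      rw [Real.log_div hx0.ne' h1x.ne']; push_cast; ring_nf
    have e2 : ((φ x : ℝ):ℂ) ^ (c-1) = Complex.exp ((c-1) * (Real.log x - Real.log (1-x))) := by
      rw [rcpow_exp hφx, hφ]
      simp only []
      rw [Real.log_div hx0.ne' h1x.ne']; push_cast; ring_nf
    have e3 : (1 + ((φ x : ℝ):ℂ)) ^ (-(a+c)) = Complex.exp ((a+c) * Real.log (1-x)) := by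
      have : (1 : ℂ) + ((φ x : ℝ):ℂ) = (((1 - x)⁻¹ : ℝ) : ℂ) := by
        rw [← h1φ]; push_cast; ring
      rw [this, rcpow_exp (inv_pos.mpr h1x), Real.log_inv]
      push_cast; ring_nf
    have e4 : (x:ℂ) ^ (a-1) = Complex.exp ((a-1) * Real.log x) := by
      rw [rcpow_exp hx0]
    have e5 : (x:ℂ) ^ (c-1) = Complex.exp ((c-1) * Real.log x) := by
      rw [rcpow_exp hx0]
    have e6 : (1 - (x:ℂ)) ^ (c-1) = Complex.exp ((c-1) * Real.log (1-x)) := by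
      have : (1:ℂ) - (x:ℂ) = ((1 - x : ℝ):ℂ) := by push_cast; ring
      rw [this, rcpow_exp h1x]
    have e7 : (1 - (x:ℂ)) ^ (a-1) = Complex.exp ((a-1) * Real.log (1-x)) := by
      have : (1:ℂ) - (x:ℂ) = ((1 - x : ℝ):ℂ) := by push_cast; ring
      rw [this, rcpow_exp h1x]
    have e8 : |((1-x)^2)⁻¹| = ((1-x)^2)⁻¹ := abs_of_pos (by positivity)
    have e9 : ((((1-x)^2)⁻¹ : ℝ) : ℂ) = Complex.exp ((-2 : ℂ) * Real.log (1-x)) := by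
      have : ((((1-x)^2)⁻¹ : ℝ) : ℂ) = (((1-x)^2 : ℝ) : ℂ) ^ (-1 : ℂ) := by
        rw [Complex.cpow_neg_one]; push_cast; ring
      rw [this, rcpow_exp (by positivity), Real.log_pow]
      push_cast; ring_nf
    rw [real_smul, e8, e9]
    simp only [hf₁, hf₂]
    rw [e1, e2, e3, e4, e5, e6, e7]
    simp only [← Complex.exp_add, mul_add, add_mul]
    congr 1 <;> · congr 1; push_cast; ring
  -- step 2: reflect f₂
  have step2 : ∫ x in Ioo (0:ℝ) (1/2), f₂ x = ∫ x in Ioo (1/2:ℝ) 1, f₁ x := by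
    have himg2 : (fun x : ℝ => 1 - x) '' Ioo (1/2:ℝ) 1 = Ioo (0:ℝ) (1/2) := by
      rw [Set.image_const_sub_Ioo]; norm_num
    have hder2 : ∀ x ∈ Ioo (1/2:ℝ) 1,
        HasDerivWithinAt (fun x : ℝ => 1 - x) (-1) (Ioo (1/2:ℝ) 1) x := fun x _ =>
      ((hasDerivAt_id x).const_sub 1).hasDerivWithinAt
    have hinj2 : InjOn (fun x : ℝ => 1 - x) (Ioo (1/2:ℝ) 1) := fun x _ y _ h => by
      simpa using h
    rw [← himg2, integral_image_eq_integral_abs_deriv_smul measurableSet_Ioo hder2 hinj2]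
    refine setIntegral_congr_fun measurableSet_Ioo (fun x hx => ?_)
    simp only [hf₁, hf₂]
    push_cast
    rw [abs_neg, abs_one, one_smul]
    ring_nf
  -- assemble
  rw [Complex.betaIntegral, intervalIntegral.integral_of_le (by norm_num : (0:ℝ) ≤ 1)]
  have hsplit : Ioc (0:ℝ) (1/2) ∪ Ioc (1/2:ℝ) 1 = Ioc (0:ℝ) 1 :=
    Set.Ioc_union_Ioc_eq_Ioc (by norm_num) (by norm_num)
  have hsum : ∫ x in Ioc (0:ℝ) 1, f₁ x =
      (∫ x in Ioc (0:ℝ) (1/2), f₁ x) + ∫ x in Ioc (1/2:ℝ) 1, f₁ x := by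
    rw [← hsplit, setIntegral_union (Set.Ioc_disjoint_Ioc_of_le le_rfl) measurableSet_Ioc
      (hint1.mono_set (by rw [← hsplit]; exact Set.subset_union_left))
      (hint1.mono_set (by rw [← hsplit]; exact Set.subset_union_right))]
  have hIoo1 : ∫ x in Ioc (0:ℝ) (1/2), f₁ x = ∫ x in Ioo (0:ℝ) (1/2), f₁ x :=
    integral_Ioc_eq_integral_Ioo
  have hIoo2 : ∫ x in Ioc (1/2:ℝ) 1, f₁ x = ∫ x in Ioo (1/2:ℝ) 1, f₁ x :=
    integral_Ioc_eq_integral_Ioo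
  have hadd : ∫ x in Ioo (0:ℝ) (1/2), (f₁ x + f₂ x) =
      (∫ x in Ioo (0:ℝ) (1/2), f₁ x) + ∫ x in Ioo (0:ℝ) (1/2), f₂ x := by
    refine integral_add ?_ ?_
    · exact (hint1.mono_set (fun x hx => ⟨hx.1, by rcases hx with ⟨_, h⟩; linarith⟩)).mono_set
        Set.Ioo_subset_Ioc_self
    · exact (hint2.mono_set (fun x hx => ⟨hx.1, by rcases hx with ⟨_, h⟩; linarith⟩)).mono_set
        Set.Ioo_subset_Ioc_self
  rw [step1, hadd, step2, hsum, hIoo1, hIoo2]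

/-- Picard-type integral evaluation: for `b : ℝ` and `s : ℂ` with `Re s > 0`,
`∫₀¹ cos(b log t) t^{s/2-1} (2t + (1-t)²/2)^{-s/2} dt
  = 2^{s/2-1} Γ(s/2+ib) Γ(s/2-ib) / Γ(s)`. -/
theorem picard_F_b_two_eval (b : ℝ) (s : ℂ) (hs : 0 < s.re) :
    ∫ t in Set.Ioo (0:ℝ) 1,
      (Real.cos (b * Real.log t) : ℂ) * (t : ℂ) ^ (s / 2 - 1) *
        ((2 * t + (1 - t) ^ 2 / 2 : ℝ) : ℂ) ^ (-(s / 2)) =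
      (2 : ℂ) ^ (s / 2 - 1) * Complex.Gamma (s / 2 + I * b) *
        Complex.Gamma (s / 2 - I * b) / Complex.Gamma s := by
  set a : ℂ := s / 2 + I * b with haa
  set c : ℂ := s / 2 - I * b with hcc
  have hare : a.re = s.re / 2 := by simp [haa]
  have hcre : c.re = s.re / 2 := by simp [hcc]
  have ha : 0 < a.re := by rw [hare]; linarith
  have hc : 0 < c.re := by rw [hcre]; linarith
  have hac : a + c = s := by rw [haa, hcc]; ring
  -- pointwise rewriting
  have key1 : ∀ t ∈ Ioo (0:ℝ) 1,
      (Real.cos (b * Real.log t) : ℂ) * (t : ℂ) ^ (s / 2 - 1) *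
        ((2 * t + (1 - t) ^ 2 / 2 : ℝ) : ℂ) ^ (-(s / 2)) =
      (2:ℂ) ^ (s/2 - 1) * (((t:ℂ) ^ (a-1) + (t:ℂ) ^ (c-1)) * (1 + (t:ℂ)) ^ (-(a+c))) := by
    intro t ht
    rcases ht with ⟨ht0, ht1⟩
    have h1t : (0:ℝ) < 1 + t := by linarith
    have hbase : (2 * t + (1 - t) ^ 2 / 2 : ℝ) = (1 + t)^2 / 2 := by ring
    have hlog : Real.log ((1 + t)^2 / 2) = 2 * Real.log (1 + t) - Real.log 2 := by
      rw [Real.log_div (by positivity) (by norm_num), Real.log_pow]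
      push_cast; ring
    have e0 : ((2 * t + (1 - t) ^ 2 / 2 : ℝ) : ℂ) ^ (-(s/2)) =
        Complex.exp (-(s/2) * (2 * Real.log (1 + t) - Real.log 2)) := by
      rw [hbase, rcpow_exp (by positivity), hlog]; push_cast; ring_nf
    have e1 : (t:ℂ) ^ (s/2 - 1) = Complex.exp ((s/2 - 1) * Real.log t) := rcpow_exp ht0 _
    have e2 : (t:ℂ) ^ (a - 1) = Complex.exp ((a - 1) * Real.log t) := rcpow_exp ht0 _
    have e3 : (t:ℂ) ^ (c - 1) = Complex.exp ((c - 1) * Real.log t) := rcpow_exp ht0 _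
    have e4 : (1 + (t:ℂ)) ^ (-(a+c)) = Complex.exp (-(a+c) * Real.log (1 + t)) := by
      have : (1:ℂ) + (t:ℂ) = ((1 + t : ℝ):ℂ) := by push_cast; ring
      rw [this, rcpow_exp h1t]
    have e5 : (2:ℂ) ^ (s/2 - 1) = Complex.exp ((s/2 - 1) * Real.log 2) := by
      have : (2:ℂ) = ((2:ℝ):ℂ) := by norm_num
      rw [this, rcpow_exp (by norm_num)]
    have e6 : (Real.cos (b * Real.log t) : ℂ) =
        (Complex.exp ((b * Real.log t : ℝ) * I) + Complex.exp (-(b * Real.log t : ℝ) * I)) / 2 := by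
      rw [Complex.ofReal_cos]
      have := Complex.two_cos ((b * Real.log t : ℝ) : ℂ)
      linear_combination this / 2
    rw [e0, e1, e2, e3, e4, e5, e6]
    simp only [← Complex.exp_add, mul_add, add_mul, div_mul_eq_mul_div,
      mul_div_assoc]
    rw [div_eq_iff (two_ne_zero' ℂ)]
    have hE : ∀ A : ℂ, Complex.exp A * 2 = Complex.exp (A + ((Real.log 2 : ℝ) : ℂ)) := by
      intro A
      rw [Complex.exp_add, ← Complex.ofReal_exp, Real.exp_log (by norm_num)]
      norm_num
    rw [add_mul, hE, hE]
    congr 1 <;> · congr 1; rw [haa, hcc]; push_cast; ring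
  rw [setIntegral_congr_fun measurableSet_Ioo key1, MeasureTheory.integral_const_mul,
    aux_beta a c ha hc]
  have hΓ : Complex.Gamma a * Complex.Gamma c =
      Complex.Gamma s * Complex.betaIntegral a c := by
    rw [← hac]; exact Complex.Gamma_mul_Gamma_eq_betaIntegral ha hc
  have hΓs : Complex.Gamma s ≠ 0 := Complex.Gamma_ne_zero_of_re_pos hs
  rw [eq_div_iff hΓs]
  linear_combination (-(2:ℂ) ^ (s/2 - 1)) * hΓ
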